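/- Let p ∈ ℝ, B > 0, C ≥ -1. Suppose u : (-1,1) → ℝ is C² on [0,1) and satisfies u(t)·u''(t) ≥ B·|u(t)|^p + C·(u'(t))² for all 0 < t < 1. If u(0) > 0 and u'(0) ≥ 0, then u(t) > 0 for all t ∈ [0,1). -/
import Mathlib


theorem stmt18 (p B C : ℝ) (hB : 0 < B) (hC : -1 ≤ C) (u : ℝ → ℝ)
    (hC2 : ContDiffOn ℝ 2 u (Set.Ico (0 : ℝ) 1))
    (hineq : ∀ t ∈ Set.Ioo (0 : ℝ) 1,
      u t * derivWithin (derivWithin u (Set.Ico (0 : ℝ) 1)) (Set.Ico (0 : ℝ) 1) t ≥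
        B * |u t| ^ p + C * (derivWithin u (Set.Ico (0 : ℝ) 1) t) ^ 2)
    (h0 : 0 < u 0) (h0' : 0 ≤ derivWithin u (Set.Ico (0 : ℝ) 1) 0) :
    ∀ t ∈ Set.Ico (0 : ℝ) 1, 0 < u t := by
  set s : Set ℝ := Set.Ico (0 : ℝ) 1 with hs
  set u' : ℝ → ℝ := derivWithin u s with hu'
  by_contra hcon
  push_neg at hcon
  obtain ⟨t₀, ht₀, ht₀u⟩ := hcon
  -- basic regularity facts
  have hucont : ContinuousOn u s := hC2.continuousOn
  have hudiff : DifferentiableOn ℝ u s := hC2.differentiableOn (by norm_num)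
  have hu'C1 : ContDiffOn ℝ 1 u' s := hC2.derivWithin (uniqueDiffOn_Ico 0 1) (by norm_num)
  have hu'cont : ContinuousOn u' s := hu'C1.continuousOn
  have hu'diff : DifferentiableOn ℝ u' s := hu'C1.differentiableOn (by norm_num)
  -- on the open interval, within-derivatives are plain derivatives
  have hnhds : ∀ t ∈ Set.Ioo (0:ℝ) 1, s ∈ nhds t := fun t ht => Ico_mem_nhds ht.1 ht.2
  have hudat : ∀ t ∈ Set.Ioo (0:ℝ) 1, DifferentiableAt ℝ u t := fun t ht =>
    (hudiff t ⟨ht.1.le, ht.2⟩).differentiableAt (hnhds t ht)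
  have hu'dat : ∀ t ∈ Set.Ioo (0:ℝ) 1, DifferentiableAt ℝ u' t := fun t ht =>
    (hu'diff t ⟨ht.1.le, ht.2⟩).differentiableAt (hnhds t ht)
  have hderu : ∀ t ∈ Set.Ioo (0:ℝ) 1, deriv u t = u' t := fun t ht =>
    (derivWithin_of_mem_nhds (hnhds t ht)).symm
  -- the set of points where u ≤ 0
  set T : Set ℝ := {t | t ∈ s ∧ u t ≤ 0} with hT
  have hTne : T.Nonempty := ⟨t₀, ht₀, ht₀u⟩
  have hTbdd : BddBelow T := ⟨0, fun t ht => ht.1.1⟩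
  set x : ℝ := sInf T with hx
  have hx0 : 0 ≤ x := le_csInf hTne fun t ht => ht.1.1
  have hxt₀ : x ≤ t₀ := csInf_le hTbdd ⟨ht₀, ht₀u⟩
  have hx1 : x < 1 := lt_of_le_of_lt hxt₀ ht₀.2
  have hxs : x ∈ s := ⟨hx0, hx1⟩
  -- u x ≤ 0
  have hux_le : u x ≤ 0 := by
    obtain ⟨v, hvanti, hvtend, hvmem⟩ := exists_seq_tendsto_sInf hTne hTbdd
    have htendw : Filter.Tendsto v Filter.atTop (nhdsWithin x s) :=
      tendsto_nhdsWithin_of_tendsto_nhds_of_eventually_within v hvtend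
        (Filter.Eventually.of_forall fun n => (hvmem n).1)
    have := ((hucont x hxs).tendsto.comp htendw)
    exact le_of_tendsto this (Filter.Eventually.of_forall fun n => (hvmem n).2)
  -- points strictly before x are positive
  have hpos : ∀ t, 0 ≤ t → t < x → 0 < u t := by
    intro t ht htx
    by_contra h
    push_neg at h
    exact absurd (csInf_le hTbdd ⟨⟨ht, lt_trans htx hx1⟩, h⟩) (not_le.2 htx)
  have hx0' : 0 < x := by
    rcases eq_or_lt_of_le hx0 with h | h
    · exact absurd hux_le (by rw [← h]; exact not_le.2 h0)
    · exact h
  -- u x ≥ 0 by left limit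
  have hux_ge : 0 ≤ u x := by
    have hcw : ContinuousWithinAt u (Set.Ico 0 x) x :=
      (hucont x hxs).mono (fun t ht => ⟨ht.1, lt_trans ht.2 hx1⟩)
    have hne : (nhdsWithin x (Set.Ico 0 x)).NeBot := by
      refine mem_closure_iff_nhdsWithin_neBot.1 ?_
      rw [closure_Ico (ne_of_lt hx0')]
      exact ⟨hx0, le_refl x⟩
    refine ge_of_tendsto hcw ?_
    filter_upwards [self_mem_nhdsWithin] with t ht
    exact (hpos t ht.1 ht.2).le
  have hux : u x = 0 := le_antisymm hux_le hux_ge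
  -- F = u * u' is monotone on [0, x]
  have hIccs : Set.Icc (0:ℝ) x ⊆ s := fun t ht => ⟨ht.1, lt_of_le_of_lt ht.2 hx1⟩
  have hIoo : ∀ t ∈ Set.Ioo (0:ℝ) x, t ∈ Set.Ioo (0:ℝ) 1 := fun t ht =>
    ⟨ht.1, lt_trans ht.2 hx1⟩
  have hFmono : MonotoneOn (fun t => u t * u' t) (Set.Icc 0 x) := by
    apply monotoneOn_of_deriv_nonneg (convex_Icc 0 x)
    · exact ((hucont.mono hIccs).mul (hu'cont.mono hIccs))
    · rw [interior_Icc]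
      intro t ht
      exact ((hudat t (hIoo t ht)).mul (hu'dat t (hIoo t ht))).differentiableWithinAt
    · rw [interior_Icc]
      intro t ht
      have ht1 := hIoo t ht
      have hd : deriv (fun t => u t * u' t) t =
          deriv u t * u' t + u t * deriv u' t :=
        deriv_mul (hudat t ht1) (hu'dat t ht1)
      rw [hd, hderu t ht1]
      have hkey := hineq t ht1
      rw [derivWithin_of_mem_nhds (hnhds t ht1)] at hkey
      have h1 : (0:ℝ) < B * |u t| ^ p :=
        mul_pos hB (Real.rpow_pos_of_pos (abs_pos.2 (ne_of_gt (hpos t ht.1.le ht.2))) p)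
      nlinarith [sq_nonneg (u' t)]
  -- hence u * u' ≥ 0 on [0, x]
  have hF0 : 0 ≤ u 0 * u' 0 := mul_nonneg h0.le h0'
  have hFnonneg : ∀ t ∈ Set.Icc (0:ℝ) x, 0 ≤ u t * u' t := fun t ht =>
    le_trans hF0 (hFmono ⟨le_refl 0, hx0⟩ ht ht.1)
  -- g = u^2 is monotone on [0, x]
  have hgmono : MonotoneOn (fun t => u t ^ 2) (Set.Icc 0 x) := by
    apply monotoneOn_of_deriv_nonneg (convex_Icc 0 x)
    · exact ((hucont.mono hIccs).pow 2)
    · rw [interior_Icc]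
      intro t ht
      exact ((hudat t (hIoo t ht)).pow 2).differentiableWithinAt
    · rw [interior_Icc]
      intro t ht
      have ht1 := hIoo t ht
      have hd : deriv (fun t => u t ^ 2) t = 2 * u t * deriv u t := by
        rw [show (fun t => u t ^ 2) = (fun y : ℝ => y ^ 2) ∘ u from rfl,
          deriv_comp t (by fun_prop) (hudat t ht1)]
        simp [deriv_pow]
        try ring
      rw [hd, hderu t ht1]
      have := hFnonneg t ⟨ht.1.le, ht.2.le⟩
      nlinarith
  have h2 : u 0 ^ 2 ≤ u x ^ 2 := hgmono (Set.left_mem_Icc.2 hx0) (Set.right_mem_Icc.2 hx0) hx0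
  rw [hux] at h2
  nlinarith
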